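/- Let g be a finite-dimensional nilpotent Lie algebra over a field K. Define subspaces F_i of the dual space g* recursively by F_0 = 0 and, for i ≥ 0, F_{i+1} = { θ ∈ g* : for every X ∈ g such that φ(X) = 0 for all φ ∈ F_i, one has θ(⁅X,Y⁆) = 0 for all Y ∈ g } (this condition expresses, in finite dimension, that the Chevalley–Eilenberg differential d_g θ = −θ∘⁅·,·⁆ lies in Λ²F_i). Then for every i ≥ 0, F_i equals the dual annihilator of the i-th term of the lower central series: F_i = { θ ∈ g* : θ(X) = 0 for all X ∈ g^(i) }. -/

import Mathlib

/-- For a finite-dimensional nilpotent Lie algebra `g` over a field `K`,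
the recursively defined filtration `F` of the dual space (with `F 0 = 0` and
`F (i+1)` the set of covectors whose Chevalley–Eilenberg differential lies in `Λ² (F i)`,
expressed by the pairing condition below) coincides with the dual annihilators of the
lower central series: `F i = {θ : θ(X) = 0 for all X ∈ g^(i)}`. -/
theorem rumin_filtration_eq_annihilator_lowerCentralSeries
    {K : Type*} [Field K] {g : Type*} [LieRing g] [LieAlgebra K g]
    [FiniteDimensional K g] [LieRing.IsNilpotent g]
    (F : ℕ → Set (Module.Dual K g))
    (hF0 : ∀ θ : Module.Dual K g, θ ∈ F 0 ↔ θ = 0)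
    (hFsucc : ∀ i : ℕ, ∀ θ : Module.Dual K g,
      θ ∈ F (i + 1) ↔
        ∀ X : g, (∀ φ ∈ F i, φ X = 0) → ∀ Y : g, θ ⁅X, Y⁆ = 0) :
    ∀ i : ℕ, ∀ θ : Module.Dual K g,
      θ ∈ F i ↔ ∀ X ∈ LieModule.lowerCentralSeries K g g i, θ X = 0 := by
  intro i
  induction i with
  | zero =>
    intro θ
    rw [hF0]
    constructor
    · rintro rfl X _; simp
    · intro h; ext X; exact h X (by simp)
  | succ i ih =>
    intro θ
    rw [hFsucc]
    have hmem : ∀ X : g,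
        (∀ φ ∈ F i, φ X = 0) ↔ X ∈ LieModule.lowerCentralSeries K g g i := by
      intro X
      constructor
      · intro h
        have hX : X ∈ (Submodule.dualAnnihilator
            ((LieModule.lowerCentralSeries K g g i : LieSubmodule K g g) :
              Submodule K g)).dualCoannihilator := by
          rw [Submodule.mem_dualCoannihilator]
          intro φ hφ
          exact h φ ((ih φ).mpr fun Y hY => (Submodule.mem_dualAnnihilator φ).mp hφ Y hY)
        rwa [Subspace.dualAnnihilator_dualCoannihilator_eq] at hX
      · intro hX φ hφ
        exact (ih φ).mp hφ X hX
    constructor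
    · intro h Z hZ
      rw [LieModule.lowerCentralSeries_succ] at hZ
      rw [← LieSubmodule.mem_toSubmodule, LieSubmodule.lieIdeal_oper_eq_linear_span] at hZ
      have hsub : {m : g | ∃ (x : (⊤ : LieIdeal K g))
          (n : (LieModule.lowerCentralSeries K g g i : LieSubmodule K g g)),
            ⁅(x : g), (n : g)⁆ = m} ⊆ (LinearMap.ker θ : Set g) := by
        rintro m ⟨x, n, rfl⟩
        have := h (n : g) ((hmem (n : g)).mpr n.2) (x : g)
        simp only [SetLike.mem_coe, LinearMap.mem_ker]
        rw [← lie_skew, map_neg, this, neg_zero]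
      have := Submodule.span_le.mpr hsub hZ
      simpa using this
    · intro h X hX Y
      apply h
      rw [LieModule.lowerCentralSeries_succ]
      have h1 : ⁅Y, X⁆ ∈ ⁅(⊤ : LieIdeal K g), LieModule.lowerCentralSeries K g g i⁆ :=
        LieSubmodule.lie_mem_lie trivial ((hmem X).mp hX)
      have : ⁅X, Y⁆ = -⁅Y, X⁆ := by rw [← lie_skew]
      rw [this]
      exact neg_mem h1
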